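/- For real numbers m and s with 0 < m + 1 and 0 < s - m - 1, the integral ∫₀^∞ (log t) · t^m / (1+t)^s dt equals B(s - m - 1, m + 1) · (Ψ(m+1) - Ψ(s - m - 1)), where Ψ is the digamma function. -/

import Mathlib

open MeasureTheory Set

/-- The Beta function `B(a,b) = ∫₀¹ x^(a-1) (1-x)^(b-1) dx`. -/
noncomputable def Beta (a b : ℝ) : ℝ := ∫ x in Ioo (0:ℝ) 1, x ^ (a-1) * (1-x) ^ (b-1)

/-- The digamma function, the logarithmic derivative of the Gamma function. -/
noncomputable def digamma (x : ℝ) : ℝ := deriv (fun y => Real.log (Real.Gamma y)) x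

lemma beta_eq_Gamma {a b : ℝ} (ha : 0 < a) (hb : 0 < b) :
    Beta a b = Real.Gamma a * Real.Gamma b / Real.Gamma (a+b) := by
  have hG : (0:ℝ) < Real.Gamma (a+b) := Real.Gamma_pos_of_pos (by linarith)
  have key := Complex.Gamma_mul_Gamma_eq_betaIntegral (s := (a:ℂ)) (t := (b:ℂ))
    (by simpa using ha) (by simpa using hb)
  have h1 : Complex.betaIntegral a b = (Beta a b : ℂ) := by
    rw [Complex.betaIntegral, intervalIntegral.integral_of_le zero_le_one,
      integral_Ioc_eq_integral_Ioo]
    rw [show ((Beta a b : ℂ)) = ∫ x in Ioo (0:ℝ) 1, ((x ^ (a-1) * (1-x) ^ (b-1) : ℝ) : ℂ) by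
      exact integral_ofReal.symm]
    apply setIntegral_congr_fun measurableSet_Ioo
    intro x hx
    simp only
    rw [Complex.ofReal_mul, Complex.ofReal_cpow hx.1.le,
      Complex.ofReal_cpow (by linarith [hx.2] : (0:ℝ) ≤ 1 - x)]
    push_cast; ring
  rw [h1] at key
  have := congrArg Complex.re key
  simp only [← Complex.ofReal_add, Complex.Gamma_ofReal, ← Complex.ofReal_mul,
    Complex.ofReal_re] at this
  field_simp
  linarith [this]

lemma betaIntegrable {a b : ℝ} (ha : 0 < a) (hb : 0 < b) :
    IntegrableOn (fun x : ℝ => x ^ (a-1) * (1-x) ^ (b-1)) (Ioo 0 1) := by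
  have h := (Complex.betaIntegral_convergent (u := (a:ℂ)) (v := (b:ℂ))
    (by simpa using ha) (by simpa using hb))
  rw [intervalIntegrable_iff_integrableOn_Ioo_of_le zero_le_one] at h
  apply h.re.congr
  rw [Filter.eventuallyEq_iff_exists_mem]
  refine ⟨Ioo 0 1, (ae_restrict_iff' measurableSet_Ioo).2
    (Filter.Eventually.of_forall fun x hx => hx), ?_⟩
  intro x hx
  have hkey : ((x:ℂ)) ^ ((a:ℂ)-1) * (1 - (x:ℂ)) ^ ((b:ℂ)-1)
      = ((x ^ (a-1) * (1-x) ^ (b-1) : ℝ) : ℂ) := by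
    rw [Complex.ofReal_mul, Complex.ofReal_cpow hx.1.le,
      Complex.ofReal_cpow (by linarith [hx.2] : (0:ℝ) ≤ 1 - x)]
    push_cast; ring
  simp only [hkey]
  exact Complex.ofReal_re _

lemma contOn_beta {a b : ℝ} :
    ContinuousOn (fun x : ℝ => Real.log x * (x ^ (a-1) * (1-x) ^ (b-1))) (Ioo 0 1) := by
  apply ContinuousOn.mul
  · exact Real.continuousOn_log.mono (fun x hx => ne_of_gt hx.1)
  apply ContinuousOn.mul
  · intro x hx
    exact (Real.continuousAt_rpow_const x _ (Or.inl (ne_of_gt hx.1))).continuousWithinAt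
  · intro x hx
    exact (ContinuousAt.continuousWithinAt
      (((continuous_const.sub continuous_id).continuousAt).rpow_const
        (Or.inl (by intro h; simp at h; linarith [hx.2]))))

lemma contOn_beta' {a b : ℝ} :
    ContinuousOn (fun x : ℝ => x ^ (a-1) * (1-x) ^ (b-1)) (Ioo 0 1) := by
  apply ContinuousOn.mul
  · intro x hx
    exact (Real.continuousAt_rpow_const x _ (Or.inl (ne_of_gt hx.1))).continuousWithinAt
  · intro x hx
    exact (ContinuousAt.continuousWithinAt
      (((continuous_const.sub continuous_id).continuousAt).rpow_const
        (Or.inl (by intro h; simp at h; linarith [hx.2]))))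

lemma log_abs_le {a x : ℝ} (ha : 0 < a) (hx : x ∈ Ioo (0:ℝ) 1) :
    |Real.log x| ≤ (2/a) * x ^ (-(a/2)) := by
  have hx0 := hx.1
  have hlog : Real.log x < 0 := Real.log_neg hx0 hx.2
  rw [abs_of_neg hlog]
  have h1 : Real.log (x ^ (-(a/2))) ≤ x ^ (-(a/2)) - 1 :=
    Real.log_le_sub_one_of_pos (Real.rpow_pos_of_pos hx0 _)
  rw [Real.log_rpow hx0] at h1
  have h2 : x ^ (-(a/2)) - 1 ≤ x ^ (-(a/2)) := by linarith
  have := h1.trans h2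
  calc -Real.log x = (2/a) * (-(a/2) * Real.log x) := by field_simp
    _ ≤ (2/a) * x ^ (-(a/2)) := by
        apply mul_le_mul_of_nonneg_left this (by positivity)

lemma logBetaIntegrable {a b : ℝ} (ha : 0 < a) (hb : 0 < b) :
    IntegrableOn (fun x : ℝ => Real.log x * (x ^ (a-1) * (1-x) ^ (b-1))) (Ioo 0 1) := by
  have hbase := (betaIntegrable (by positivity : (0:ℝ) < a/2) hb).const_mul (2/a)
  apply Integrable.mono' hbase
    (contOn_beta.aestronglyMeasurable measurableSet_Ioo)
  rw [ae_restrict_iff' measurableSet_Ioo]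
  filter_upwards with x hx
  have hx0 := hx.1
  have h1x : (0:ℝ) < 1 - x := by linarith [hx.2]
  rw [Real.norm_eq_abs, abs_mul, abs_mul,
    abs_of_nonneg (Real.rpow_nonneg hx0.le _), abs_of_nonneg (Real.rpow_nonneg h1x.le _)]
  have := log_abs_le ha hx
  calc |Real.log x| * (x ^ (a-1) * (1-x) ^ (b-1))
      ≤ ((2/a) * x ^ (-(a/2))) * (x ^ (a-1) * (1-x) ^ (b-1)) := by
        apply mul_le_mul_of_nonneg_right this (by positivity)
    _ = (2/a) * (x ^ (a/2-1) * (1-x) ^ (b-1)) := by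
        rw [show a/2 - 1 = -(a/2) + (a-1) by ring, Real.rpow_add hx0]; ring

lemma hasDerivAt_beta {a b : ℝ} (ha : 0 < a) (hb : 0 < b) :
    HasDerivAt (fun c => Beta c b)
      (∫ x in Ioo (0:ℝ) 1, Real.log x * (x ^ (a-1) * (1-x) ^ (b-1))) a := by
  have hball : ∀ c ∈ Metric.ball a (a/2), a/2 ≤ c := by
    intro c hc
    rw [Metric.mem_ball, Real.dist_eq, abs_lt] at hc
    linarith [hc.1]
  have main := hasDerivAt_integral_of_dominated_loc_of_deriv_le
    (μ := volume.restrict (Ioo (0:ℝ) 1)) (x₀ := a)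
    (F := fun c x => x ^ (c-1) * (1-x) ^ (b-1))
    (F' := fun c x => Real.log x * (x ^ (c-1) * (1-x) ^ (b-1)))
    (bound := fun x => |Real.log x * (x ^ (a/2-1) * (1-x) ^ (b-1))|)
    (Metric.ball_mem_nhds a (by positivity : (0:ℝ) < a/2))
    (Filter.Eventually.of_forall fun c => (contOn_beta'.aestronglyMeasurable measurableSet_Ioo))
    (betaIntegrable ha hb)
    (contOn_beta.aestronglyMeasurable measurableSet_Ioo)
    ?_ ((logBetaIntegrable (by positivity) hb).abs) ?_
  · exact main.2
  · rw [ae_restrict_iff' measurableSet_Ioo]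
    filter_upwards with x hx c hc
    have hx0 := hx.1
    have h1x : (0:ℝ) < 1 - x := by linarith [hx.2]
    have hmono : x ^ (c-1) ≤ x ^ (a/2-1) :=
      Real.rpow_le_rpow_of_exponent_ge hx0 hx.2.le (by linarith [hball c hc])
    rw [Real.norm_eq_abs, abs_mul, abs_mul, abs_mul, abs_mul,
      abs_of_nonneg (Real.rpow_nonneg hx0.le (c-1)),
      abs_of_nonneg (Real.rpow_nonneg hx0.le (a/2-1)),
      abs_of_nonneg (Real.rpow_nonneg h1x.le _)]
    have h0 : (0:ℝ) ≤ (1-x) ^ (b-1) := Real.rpow_nonneg h1x.le _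
    gcongr
  · rw [ae_restrict_iff' measurableSet_Ioo]
    filter_upwards with x hx c _
    have hx0 := hx.1
    have hd : HasDerivAt (fun c : ℝ => x ^ (c-1)) (Real.log x * x ^ (c-1)) c := by
      have h1 := (Real.hasStrictDerivAt_const_rpow hx0 (c-1)).hasDerivAt
      have h2 : HasDerivAt (fun c : ℝ => c - 1) 1 c := (hasDerivAt_id c).sub_const 1
      have := h1.comp c h2
      simpa [mul_comm, Function.comp_def] using this
    simpa [mul_assoc] using hd.mul_const ((1-x) ^ (b-1))

lemma Gamma_side {a b : ℝ} (ha : 0 < a) (hb : 0 < b) :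
    HasDerivAt (fun c => Real.Gamma c * Real.Gamma b / Real.Gamma (c+b))
      ((Real.Gamma a * Real.Gamma b / Real.Gamma (a+b)) * (digamma a - digamma (a+b))) a := by
  have hGa : (0:ℝ) < Real.Gamma a := Real.Gamma_pos_of_pos ha
  have hGab : (0:ℝ) < Real.Gamma (a+b) := Real.Gamma_pos_of_pos (by linarith)
  have hne : ∀ (c : ℝ), 0 < c → ∀ m : ℕ, c ≠ -m := by
    intro c hc m
    have : (0:ℝ) ≤ m := Nat.cast_nonneg m
    intro h; rw [h] at hc; linarith
  have hda : HasDerivAt Real.Gamma (deriv Real.Gamma a) a :=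
    (Real.differentiableAt_Gamma (hne a ha)).hasDerivAt
  have hdab : HasDerivAt Real.Gamma (deriv Real.Gamma (a+b)) (a+b) :=
    (Real.differentiableAt_Gamma (hne (a+b) (by linarith))).hasDerivAt
  have hdig : ∀ (c : ℝ), 0 < c → digamma c = deriv Real.Gamma c / Real.Gamma c := by
    intro c hc
    have hGc : (0:ℝ) < Real.Gamma c := Real.Gamma_pos_of_pos hc
    have hlog : HasDerivAt (fun y => Real.log (Real.Gamma y))
        (deriv Real.Gamma c / Real.Gamma c) c :=
      ((Real.differentiableAt_Gamma (hne c hc)).hasDerivAt).log hGc.ne'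
    rw [digamma]
    exact hlog.deriv
  have hnum : HasDerivAt (fun c => Real.Gamma c * Real.Gamma b)
      (deriv Real.Gamma a * Real.Gamma b) a := hda.mul_const _
  have hden : HasDerivAt (fun c => Real.Gamma (c+b)) (deriv Real.Gamma (a+b)) a := by
    have := hdab.comp a ((hasDerivAt_id a).add_const b)
    simpa [Function.comp_def] using this
  have := hnum.div hden hGab.ne'
  refine this.congr_deriv ?_
  rw [hdig a ha, hdig (a+b) (by linarith)]
  field_simp

lemma logBeta_eq {a b : ℝ} (ha : 0 < a) (hb : 0 < b) :
    (∫ x in Ioo (0:ℝ) 1, Real.log x * (x ^ (a-1) * (1-x) ^ (b-1)))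
      = Beta a b * (digamma a - digamma (a+b)) := by
  have h1 := hasDerivAt_beta ha hb
  have h2 := Gamma_side ha hb
  have heq : (fun c => Real.Gamma c * Real.Gamma b / Real.Gamma (c+b))
      =ᶠ[nhds a] (fun c => Beta c b) := by
    filter_upwards [Ioi_mem_nhds ha] with c hc
    exact (beta_eq_Gamma hc hb).symm
  have h2' : HasDerivAt (fun c => Beta c b)
      ((Real.Gamma a * Real.Gamma b / Real.Gamma (a+b)) * (digamma a - digamma (a+b))) a :=
    h2.congr_of_eventuallyEq heq.symm
  rw [h1.unique h2', beta_eq_Gamma ha hb]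

lemma reflect_integral (g : ℝ → ℝ) :
    (∫ x in Ioo (0:ℝ) 1, g (1-x)) = ∫ x in Ioo (0:ℝ) 1, g x := by
  have himg : (fun x : ℝ => 1 - x) '' Ioo 0 1 = Ioo 0 1 := by
    ext t
    simp only [mem_image, mem_Ioo]
    constructor
    · rintro ⟨x, ⟨h1, h2⟩, rfl⟩; constructor <;> linarith
    · rintro ⟨h1, h2⟩; exact ⟨1 - t, ⟨by linarith, by linarith⟩, by ring⟩
  have key := integral_image_eq_integral_abs_deriv_smul (s := Ioo (0:ℝ) 1)
    (f := fun x : ℝ => 1 - x) (f' := fun _ => (-1:ℝ)) measurableSet_Ioo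
    (fun x _ => ((hasDerivAt_id x).const_sub 1).hasDerivWithinAt)
    (fun x _ y _ h => by simpa using h) g
  rw [himg] at key
  rw [key]
  apply setIntegral_congr_fun measurableSet_Ioo
  intro x hx
  simp

lemma reflect_integrable {g : ℝ → ℝ} (hg : IntegrableOn g (Ioo (0:ℝ) 1)) :
    IntegrableOn (fun x => g (1-x)) (Ioo (0:ℝ) 1) := by
  have himg : (fun x : ℝ => 1 - x) '' Ioo 0 1 = Ioo 0 1 := by
    ext t
    simp only [mem_image, mem_Ioo]
    constructor
    · rintro ⟨x, ⟨h1, h2⟩, rfl⟩; constructor <;> linarith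
    · rintro ⟨h1, h2⟩; exact ⟨1 - t, ⟨by linarith, by linarith⟩, by ring⟩
  have key := integrableOn_image_iff_integrableOn_abs_deriv_smul (s := Ioo (0:ℝ) 1)
    (f := fun x : ℝ => 1 - x) (f' := fun _ => (-1:ℝ)) measurableSet_Ioo
    (fun x _ => ((hasDerivAt_id x).const_sub 1).hasDerivWithinAt)
    (fun x _ y _ h => by simpa using h) g
  rw [himg] at key
  have := key.1 hg
  simpa using this

lemma subst_integral (g : ℝ → ℝ) :
    (∫ t in Ioi (0:ℝ), g t)
      = ∫ x in Ioo (0:ℝ) 1, ((1-x)^2)⁻¹ * g (x / (1-x)) := by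
  have himg : (fun x : ℝ => x / (1 - x)) '' Ioo 0 1 = Ioi 0 := by
    ext t
    simp only [mem_image, mem_Ioo, mem_Ioi]
    constructor
    · rintro ⟨x, ⟨h1, h2⟩, rfl⟩
      exact div_pos h1 (by linarith)
    · intro ht
      refine ⟨t / (1 + t), ⟨by positivity, ?_⟩, ?_⟩
      · rw [div_lt_one (by linarith)]; linarith
      · field_simp; ring
  have hderiv : ∀ x ∈ Ioo (0:ℝ) 1,
      HasDerivWithinAt (fun x : ℝ => x / (1 - x)) (((1-x)^2)⁻¹) (Ioo 0 1) x := by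
    intro x hx
    have h1x : (1:ℝ) - x ≠ 0 := by have := hx.2; intro hh; nlinarith
    have h := (hasDerivAt_id x).div ((hasDerivAt_id x).const_sub 1) h1x
    refine h.hasDerivWithinAt.congr_deriv ?_
    show (1 * (1 - x) - x * -1) / (1 - x) ^ 2 = ((1-x)^2)⁻¹
    ring
  have hinj : InjOn (fun x : ℝ => x / (1 - x)) (Ioo 0 1) := by
    intro x hx y hy h
    dsimp at h
    have hx1 : (1:ℝ) - x ≠ 0 := by have := hx.2; intro hh; nlinarith
    have hy1 : (1:ℝ) - y ≠ 0 := by have := hy.2; intro hh; nlinarith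
    field_simp at h
    nlinarith [h]
  have key := integral_image_eq_integral_abs_deriv_smul measurableSet_Ioo hderiv hinj g
  rw [himg] at key
  rw [key]
  apply setIntegral_congr_fun measurableSet_Ioo
  intro x hx
  have h1x : (0:ℝ) < 1 - x := by linarith [hx.2]
  simp only [smul_eq_mul]
  rw [abs_of_pos (by positivity)]

theorem log_beta_integral (m s : ℝ) (hm : 0 < m + 1) (hs : 0 < s - m - 1) :
    (∫ t in Ioi (0:ℝ), Real.log t * t ^ m / (1 + t) ^ s)
      = Beta (s - m - 1) (m + 1) * (digamma (m + 1) - digamma (s - m - 1)) := by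
  set a := m + 1 with ha_def
  set b := s - m - 1 with hb_def
  have hab : a + b = s := by rw [ha_def, hb_def]; ring
  have hba : b + a = s := by rw [ha_def, hb_def]; ring
  -- Step 1: substitution t = x/(1-x)
  rw [subst_integral (fun t => Real.log t * t ^ m / (1 + t) ^ s)]
  -- Step 2: pointwise simplification of integrand
  have hpt : ∀ x ∈ Ioo (0:ℝ) 1,
      ((1-x)^2)⁻¹ * (Real.log (x/(1-x)) * (x/(1-x)) ^ m / (1 + x/(1-x)) ^ s)
        = Real.log x * (x ^ (a-1) * (1-x) ^ (b-1))
          - Real.log (1-x) * (x ^ (a-1) * (1-x) ^ (b-1)) := by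
    intro x hx
    have hx0 := hx.1
    have h1x : (0:ℝ) < 1 - x := by linarith [hx.2]
    have e0 : ((1-x)^2)⁻¹ = (1-x) ^ (-2 : ℝ) := by
      rw [← Real.rpow_natCast (1-x) 2, ← Real.rpow_neg h1x.le]
      norm_num
    have e1 : Real.log (x/(1-x)) = Real.log x - Real.log (1-x) :=
      Real.log_div hx0.ne' h1x.ne'
    have e2 : (x/(1-x)) ^ m = x ^ m * (1-x) ^ (-m : ℝ) := by
      rw [Real.div_rpow hx0.le h1x.le, Real.rpow_neg h1x.le, div_eq_mul_inv]
    have e3 : (1 + x/(1-x)) = (1-x)⁻¹ := by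
      field_simp; ring
    have e4 : (1 + x/(1-x)) ^ s = ((1-x) ^ s)⁻¹ := by
      rw [e3, Real.inv_rpow h1x.le]
    have e5 : (1-x) ^ (-2:ℝ) * (1-x) ^ (-m:ℝ) * (1-x) ^ s = (1-x) ^ (b-1) := by
      rw [← Real.rpow_add h1x, ← Real.rpow_add h1x]
      congr 1
      rw [hb_def]; ring
    rw [e0, e1, e2, e4, div_eq_mul_inv, inv_inv]
    have ham : a - 1 = m := by rw [ha_def]; ring
    rw [ham]
    calc (1-x) ^ (-2:ℝ) * ((Real.log x - Real.log (1-x)) * (x ^ m * (1-x) ^ (-m:ℝ)) * (1-x) ^ s)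
        = (Real.log x - Real.log (1-x)) * x ^ m
            * ((1-x) ^ (-2:ℝ) * (1-x) ^ (-m:ℝ) * (1-x) ^ s) := by ring
      _ = Real.log x * (x ^ m * (1-x) ^ (b-1))
            - Real.log (1-x) * (x ^ m * (1-x) ^ (b-1)) := by rw [e5]; ring
  rw [setIntegral_congr_fun measurableSet_Ioo hpt]
  -- Step 3: split the integral
  have ha : (0:ℝ) < a := hm
  have hb : (0:ℝ) < b := hs
  have hint1 := logBetaIntegrable ha hb
  have hint2 : IntegrableOn
      (fun x : ℝ => Real.log (1-x) * (x ^ (a-1) * (1-x) ^ (b-1))) (Ioo 0 1) := by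
    have := reflect_integrable (g := fun x : ℝ => Real.log x * (x ^ (b-1) * (1-x) ^ (a-1)))
      (logBetaIntegrable hb ha)
    apply this.congr_fun ?_ measurableSet_Ioo
    intro x hx
    simp only
    rw [show (1:ℝ) - (1-x) = x by ring]
    ring
  rw [integral_sub hint1 hint2]
  -- Step 4: evaluate both integrals
  have hI1 := logBeta_eq ha hb
  have hI2 : (∫ x in Ioo (0:ℝ) 1, Real.log (1-x) * (x ^ (a-1) * (1-x) ^ (b-1)))
      = Beta b a * (digamma b - digamma (b+a)) := by
    rw [← logBeta_eq hb ha]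
    rw [← reflect_integral (fun x : ℝ => Real.log x * (x ^ (b-1) * (1-x) ^ (a-1)))]
    apply setIntegral_congr_fun measurableSet_Ioo
    intro x hx
    simp only
    rw [show (1:ℝ) - (1-x) = x by ring]
    ring
  rw [hI1, hI2, hab, hba]
  have hsym : Beta a b = Beta b a := by
    rw [beta_eq_Gamma ha hb, beta_eq_Gamma hb ha, add_comm]
    ring
  rw [hsym]
  ring
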